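/- Let 1 ≤ k ≤ N and let Λ be either Λᵃ(kπh) or Λᵒ(kπh), with φ the corresponding eigenvector (φ_j = sin(kπx_j), φ_{j+1/2} = ((40+Λ)/(8(10−Λ)))·(φ_j + φ_{j+1})). Then its discrete L²-norm satisfies ‖φ‖²_{h,0} = 1/(3·W̃(Λ)). -/

import Mathlib

open Real Finset

noncomputable def Delta (η : ℝ) : ℝ :=
  1 + 268 * Real.cos (η / 2) ^ 2 - 44 * Real.cos (η / 2) ^ 4

noncomputable def Lama (η : ℝ) : ℝ :=
  120 * Real.sin (η / 2) ^ 2 / (11 + 4 * Real.cos (η / 2) ^ 2 + Real.sqrt (Delta η))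

noncomputable def Lamo (η : ℝ) : ℝ :=
  (22 + 8 * Real.cos (η / 2) ^ 2 + 2 * Real.sqrt (Delta η)) / (1 + Real.sin (η / 2) ^ 2)

noncomputable def Wtilde (Λ : ℝ) : ℝ :=
  (Λ - 10) * (Λ ^ 2 + 16 * Λ + 240) / (19 * Λ ^ 2 + 120 * Λ - 3600)

/-- Discrete L²-norm squared of a P2 vector with nodal components `f`
and midpoint components `g`. -/
noncomputable def normH0sq (N : ℕ) (h : ℝ) (f g : ℕ → ℝ) : ℝ :=
  (h / 90) * ∑ j ∈ Finset.range (N + 1),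
    (7 * (f j) ^ 2
      + 32 * ((3 / 8) * f j + (3 / 4) * g j - (1 / 8) * f (j + 1)) ^ 2
      + 12 * (g j) ^ 2
      + 32 * (-(1 / 8) * f j + (3 / 4) * g j + (3 / 8) * f (j + 1)) ^ 2
      + 7 * (f (j + 1)) ^ 2)


/-- geometric sum of M-th roots of unity vanishes -/
lemma aux_sum_exp (M k : ℕ) (hk1 : 1 ≤ k) (hkM : k < M) :
    ∑ j ∈ Finset.range M, (Complex.exp ((2 * k * π / M : ℝ) * Complex.I)) ^ j = 0 := by
  have hM0 : (0:ℝ) < M := by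
    have : 0 < M := by omega
    exact_mod_cast this
  have hk0 : (0:ℝ) < k := by exact_mod_cast hk1
  have hkMr : (k:ℝ) < M := by exact_mod_cast hkM
  set θ : ℝ := 2 * k * π / M with hθ
  have hθpos : 0 < θ := by
    apply div_pos _ hM0
    positivity
  have hθlt : θ < 2 * π := by
    rw [hθ, div_lt_iff₀ hM0]
    nlinarith [pi_pos]
  have hz1 : Complex.exp ((θ:ℝ) * Complex.I) ≠ 1 := by
    rw [ne_eq, Complex.exp_eq_one_iff]
    rintro ⟨n, hn⟩
    have hI := Complex.I_ne_zero
    have h1 : ((θ:ℝ):ℂ) * Complex.I = ((n * (2*π) : ℝ):ℂ) * Complex.I := by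
      rw [hn]; push_cast; ring
    have h2 : ((θ:ℝ):ℂ) = ((n * (2*π) : ℝ):ℂ) := mul_right_cancel₀ hI h1
    have h3 : θ = n * (2*π) := by exact_mod_cast h2
    have hn0 : (0:ℝ) < n := by nlinarith [pi_pos]
    have hn1 : (n:ℝ) < 1 := by nlinarith [pi_pos]
    have : (0:ℤ) < n := by exact_mod_cast hn0
    have : (1:ℝ) ≤ n := by exact_mod_cast this
    linarith
  have hzM : (Complex.exp ((θ:ℝ) * Complex.I)) ^ M = 1 := by
    rw [← Complex.exp_nat_mul]
    have harg : (M:ℂ) * ((θ:ℝ) * Complex.I) = (k:ℤ) * (2 * (π:ℂ) * Complex.I) := by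
      have : (M:ℝ) * θ = k * (2*π) := by
        rw [hθ]; field_simp
      push_cast
      calc (M:ℂ) * ((θ:ℝ) * Complex.I) = (((M:ℝ) * θ : ℝ):ℂ) * Complex.I := by push_cast; ring
        _ = (((k:ℝ) * (2*π) : ℝ):ℂ) * Complex.I := by rw [this]
        _ = (k:ℂ) * (2 * (π:ℂ) * Complex.I) := by push_cast; ring
    rw [harg, Complex.exp_int_mul_two_pi_mul_I]
  rw [geom_sum_eq hz1, hzM]
  simp

lemma aux_sum_cos (M k : ℕ) (hk1 : 1 ≤ k) (hkM : k < M) (a : ℝ) :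
    ∑ j ∈ Finset.range M, Real.cos ((j : ℝ) * (2 * k * π / M) + a) = 0 := by
  have h0 := aux_sum_exp M k hk1 hkM
  have key : ∀ j : ℕ, Real.cos ((j : ℝ) * (2 * k * π / M) + a)
      = ((Complex.exp ((2 * k * π / M : ℝ) * Complex.I)) ^ j * Complex.exp ((a:ℝ) * Complex.I)).re := by
    intro j
    rw [← Complex.exp_nat_mul, ← Complex.exp_add]
    have harg : (j:ℂ) * (((2 * k * π / M : ℝ)) * Complex.I) + (a:ℝ) * Complex.I
        = (((j : ℝ) * (2 * k * π / M) + a : ℝ)) * Complex.I := by push_cast; ring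
    rw [harg, Complex.exp_ofReal_mul_I_re]
  simp_rw [key]
  rw [← Complex.re_sum, ← Finset.sum_mul, h0, zero_mul]
  simp

lemma sum_sin_sq (M k : ℕ) (hk1 : 1 ≤ k) (hkM : k < M) :
    ∑ j ∈ Finset.range M, Real.sin ((j:ℝ) * ((k:ℝ) * π / (M:ℝ))) ^ 2 = (M:ℝ) / 2 := by
  have h := aux_sum_cos M k hk1 hkM 0
  have hpt : ∀ j ∈ Finset.range M, Real.sin ((j:ℝ) * ((k:ℝ) * π / (M:ℝ))) ^ 2
      = 1/2 - Real.cos ((j:ℝ) * (2 * k * π / M) + 0) / 2 := by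
    intro j _
    have hc := Real.cos_sq ((j:ℝ) * ((k:ℝ) * π / (M:ℝ)))
    have hs := Real.sin_sq_add_cos_sq ((j:ℝ) * ((k:ℝ) * π / (M:ℝ)))
    have harg : 2 * ((j:ℝ) * ((k:ℝ) * π / (M:ℝ))) = (j:ℝ) * (2 * k * π / M) + 0 := by ring
    rw [harg] at hc
    linarith
  rw [Finset.sum_congr rfl hpt, Finset.sum_sub_distrib]
  have h2 : ∑ j ∈ Finset.range M, Real.cos ((j:ℝ) * (2 * k * π / M) + 0) / 2 = 0 := by
    rw [← Finset.sum_div, h]; norm_num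
  rw [h2, sub_zero, Finset.sum_const, Finset.card_range]
  simp
  ring

lemma sum_sin_mul (M k : ℕ) (hk1 : 1 ≤ k) (hkM : k < M) :
    ∑ j ∈ Finset.range M, Real.sin ((j:ℝ) * ((k:ℝ) * π / (M:ℝ))) * Real.sin (((j:ℝ)+1) * ((k:ℝ) * π / (M:ℝ)))
      = (M:ℝ) * Real.cos ((k:ℝ) * π / (M:ℝ)) / 2 := by
  have h := aux_sum_cos M k hk1 hkM ((k:ℝ) * π / (M:ℝ))
  have hprod : ∀ x y : ℝ, Real.sin x * Real.sin y = (Real.cos (x - y) - Real.cos (x + y)) / 2 := by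
    intro x y
    rw [Real.cos_sub, Real.cos_add]
    ring
  have hpt : ∀ j ∈ Finset.range M,
      Real.sin ((j:ℝ) * ((k:ℝ) * π / (M:ℝ))) * Real.sin (((j:ℝ)+1) * ((k:ℝ) * π / (M:ℝ)))
      = Real.cos ((k:ℝ) * π / (M:ℝ)) / 2 - Real.cos ((j:ℝ) * (2 * k * π / M) + (k:ℝ) * π / (M:ℝ)) / 2 := by
    intro j _
    rw [hprod]
    have h1 : (j:ℝ) * ((k:ℝ) * π / (M:ℝ)) - ((j:ℝ)+1) * ((k:ℝ) * π / (M:ℝ)) = -((k:ℝ) * π / (M:ℝ)) := by ring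
    have h2 : (j:ℝ) * ((k:ℝ) * π / (M:ℝ)) + ((j:ℝ)+1) * ((k:ℝ) * π / (M:ℝ)) = (j:ℝ) * (2 * k * π / M) + (k:ℝ) * π / (M:ℝ) := by ring
    rw [h1, h2, Real.cos_neg]
    ring
  rw [Finset.sum_congr rfl hpt, Finset.sum_sub_distrib]
  have h2 : ∑ j ∈ Finset.range M, Real.cos ((j:ℝ) * (2 * k * π / M) + (k:ℝ) * π / (M:ℝ)) / 2 = 0 := by
    rw [← Finset.sum_div, h]; norm_num
  rw [h2, sub_zero, Finset.sum_const, Finset.card_range]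
  simp [mul_comm]
  ring

/-- both eigenvalues satisfy the quadratic characteristic relation -/
lemma eigen_rel (η Λ : ℝ) (hΛ : Λ = Lama η ∨ Λ = Lamo η) :
    (2 - Real.cos (η/2)^2) * Λ^2 - (44 + 16*Real.cos (η/2)^2) * Λ + 240*(1 - Real.cos (η/2)^2) = 0 := by
  obtain ⟨c, hc⟩ : ∃ c, Real.cos (η/2) = c := ⟨_, rfl⟩
  obtain ⟨s, hs⟩ : ∃ s, Real.sin (η/2) = s := ⟨_, rfl⟩
  have hsc : s^2 + c^2 = 1 := by rw [← hc, ← hs]; exact Real.sin_sq_add_cos_sq _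
  have hΔ : Delta η = 1 + 268*c^2 - 44*c^4 := by rw [Delta, hc]
  have hΔ0 : 0 ≤ Delta η := by rw [hΔ]; nlinarith [sq_nonneg s, sq_nonneg (s*c), sq_nonneg c]
  obtain ⟨r, hr⟩ : ∃ r, Real.sqrt (Delta η) = r := ⟨_, rfl⟩
  have hr0 : 0 ≤ r := hr ▸ Real.sqrt_nonneg _
  have hr2 : r^2 = 1 + 268*c^2 - 44*c^4 := by rw [← hr, Real.sq_sqrt hΔ0, hΔ]
  have h2c : 2 - c^2 ≠ 0 := by nlinarith [sq_nonneg s]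
  have hlin : (2 - c^2) * Λ = 22 + 8*c^2 - 2*r ∨ (2 - c^2) * Λ = 22 + 8*c^2 + 2*r := by
    rcases hΛ with h | h
    · left
      have hD : (0:ℝ) < 11 + 4*c^2 + r := by positivity
      have h1 : Λ * (11 + 4*c^2 + r) = 120 * s^2 := by
        rw [h, Lama, hc, hs, hr]
        field_simp
      have h2 : ((2 - c^2) * Λ) * (11 + 4*c^2 + r) = (22 + 8*c^2 - 2*r) * (11 + 4*c^2 + r) := by
        linear_combination (2 - c^2) * h1 + 2*hr2 + 120*(2 - c^2)*hsc
      exact mul_right_cancel₀ (ne_of_gt hD) h2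
    · right
      have hden : (0:ℝ) < 1 + s^2 := by positivity
      have h1 : Λ * (1 + s^2) = 22 + 8*c^2 + 2*r := by
        rw [h, Lamo, hc, hs, hr]
        field_simp
      calc (2 - c^2) * Λ = Λ * (1 + s^2) := by linear_combination (-Λ) * hsc
        _ = 22 + 8*c^2 + 2*r := h1
  rw [hc]
  have hG : (2 - c^2) * ((2 - c^2) * Λ^2 - (44 + 16*c^2) * Λ + 240*(1 - c^2)) = 0 := by
    rcases hlin with h | h
    · linear_combination ((2 - c^2)*Λ - (22 + 8*c^2) - 2*r) * h + 4*hr2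
    · linear_combination ((2 - c^2)*Λ - (22 + 8*c^2) + 2*r) * h + 4*hr2
  exact (mul_eq_zero.mp hG).resolve_left h2c

lemma eigen_nonneg (η Λ : ℝ) (hΛ : Λ = Lama η ∨ Λ = Lamo η) : 0 ≤ Λ := by
  rcases hΛ with h | h
  · rw [h, Lama]; positivity
  · rw [h, Lamo]; positivity

set_option maxHeartbeats 2000000 in
theorem stmt_10 (N : ℕ) (hN : 1 ≤ N) (h : ℝ) (hh : h = 1 / ((N : ℝ) + 1))
    (k : ℕ) (hk1 : 1 ≤ k) (hkN : k ≤ N)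
    (Λ : ℝ) (hΛ : Λ = Lama ((k : ℝ) * Real.pi * h) ∨ Λ = Lamo ((k : ℝ) * Real.pi * h))
    (φ : ℕ → ℝ) (hφ : ∀ j : ℕ, φ j = Real.sin ((k : ℝ) * Real.pi * ((j : ℝ) * h)))
    (ψ : ℕ → ℝ)
    (hψ : ∀ j : ℕ, ψ j = (40 + Λ) / (8 * (10 - Λ)) * (φ j + φ (j + 1))) :
    normH0sq N h φ ψ = 1 / (3 * Wtilde Λ) := by
  have hm0 : (0:ℝ) < (N:ℝ) + 1 := by positivity
  have hkN' : k < N + 1 := Nat.lt_succ_of_le hkN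
  have hk0 : (0:ℝ) < k := by exact_mod_cast hk1
  have hkNr : (k:ℝ) ≤ N := by exact_mod_cast hkN
  have hcast : ((N + 1 : ℕ) : ℝ) = (N:ℝ) + 1 := by push_cast; ring
  set e : ℝ := (k:ℝ) * π / ((N:ℝ) + 1) with hedef
  have he : (k : ℝ) * π * h = e := by rw [hh, hedef]; ring
  have he_pos : 0 < e := div_pos (mul_pos hk0 pi_pos) hm0
  have he_lt : e < π := by
    rw [hedef, div_lt_iff₀ hm0]
    nlinarith [pi_pos]
  rw [he] at hΛ
  have hφ' : ∀ j : ℕ, φ j = Real.sin ((j:ℝ) * e) := by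
    intro j
    rw [hφ j, hh, hedef]
    congr 1
    ring
  -- the three sums
  have SA : ∑ j ∈ Finset.range (N+1), Real.sin ((j:ℝ) * e) ^ 2 = ((N:ℝ)+1) / 2 := by
    have := sum_sin_sq (N+1) k hk1 hkN'
    rw [hcast] at this
    exact this
  have SC : ∑ j ∈ Finset.range (N+1), Real.sin ((j:ℝ) * e) * Real.sin (((j:ℝ)+1) * e)
      = ((N:ℝ)+1) * Real.cos e / 2 := by
    have := sum_sin_mul (N+1) k hk1 hkN'
    rw [hcast] at this
    exact this
  have SB : ∑ j ∈ Finset.range (N+1), Real.sin (((j:ℝ)+1) * e) ^ 2 = ((N:ℝ)+1) / 2 := by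
    have e1 := Finset.sum_range_succ' (fun j : ℕ => Real.sin ((j:ℝ) * e) ^ 2) (N+1)
    have e2 := Finset.sum_range_succ (fun j : ℕ => Real.sin ((j:ℝ) * e) ^ 2) (N+1)
    have hlast : Real.sin (((N+1:ℕ):ℝ) * e) ^ 2 = 0 := by
      have : ((N+1:ℕ):ℝ) * e = (k:ℝ) * π := by
        rw [hcast, hedef]; field_simp
      rw [this, Real.sin_nat_mul_pi]
      norm_num
    have hfirst : Real.sin (((0:ℕ):ℝ) * e) ^ 2 = 0 := by norm_num
    have hsum : ∑ j ∈ Finset.range (N+1), Real.sin (((j+1:ℕ):ℝ) * e) ^ 2 = ((N:ℝ)+1) / 2 := by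
      rw [hlast] at e2
      rw [hfirst] at e1
      have := e1.symm.trans e2
      rw [SA] at this
      linarith [this]
    have : ∀ j ∈ Finset.range (N+1), Real.sin (((j:ℝ)+1) * e) ^ 2 = Real.sin (((j+1:ℕ):ℝ) * e) ^ 2 := by
      intro j _; push_cast; ring_nf
    rw [Finset.sum_congr rfl this, hsum]
  -- expand the norm
  have hterm : ∀ j ∈ Finset.range (N+1),
      7 * (φ j) ^ 2
      + 32 * ((3 / 8) * φ j + (3 / 4) * ψ j - (1 / 8) * φ (j + 1)) ^ 2
      + 12 * (ψ j) ^ 2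
      + 32 * (-(1 / 8) * φ j + (3 / 4) * ψ j + (3 / 8) * φ (j + 1)) ^ 2
      + 7 * (φ (j + 1)) ^ 2
      = (12 + 12 * ((40 + Λ) / (8 * (10 - Λ))) + 48 * ((40 + Λ) / (8 * (10 - Λ)))^2) * (Real.sin ((j:ℝ)*e))^2
      + (12 + 12 * ((40 + Λ) / (8 * (10 - Λ))) + 48 * ((40 + Λ) / (8 * (10 - Λ)))^2) * (Real.sin (((j:ℝ)+1)*e))^2
      + (-6 + 24 * ((40 + Λ) / (8 * (10 - Λ))) + 96 * ((40 + Λ) / (8 * (10 - Λ)))^2)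
          * (Real.sin ((j:ℝ)*e) * Real.sin (((j:ℝ)+1)*e)) := by
    intro j _
    rw [hψ j, hφ' j, hφ' (j+1)]
    push_cast
    ring
  rw [normH0sq, Finset.sum_congr rfl hterm, Finset.sum_add_distrib, Finset.sum_add_distrib,
    ← Finset.mul_sum, ← Finset.mul_sum, ← Finset.mul_sum, SA, SB, SC]
  -- algebraic facts about Λ
  have hrel0 := eigen_rel e Λ hΛ
  have h2 : Real.cos e = 2 * Real.cos (e/2) ^ 2 - 1 := by
    have hq := Real.cos_sq (e/2)
    rw [show 2 * (e/2) = e by ring] at hq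
    linarith
  have hrel : (1 + Real.cos e) * (Λ^2 + 16*Λ + 240) = 4 * (Λ - 10) * (Λ - 12) := by
    rw [h2]
    linear_combination (-2 : ℝ) * hrel0
  have hΛ0 : 0 ≤ Λ := eigen_nonneg e Λ hΛ
  have hcpos : 0 < Real.cos (e/2) := by
    apply Real.cos_pos_of_mem_Ioo
    constructor
    · have := pi_pos; linarith
    · linarith
  have hQpos : 0 < Λ^2 + 16*Λ + 240 := by nlinarith [sq_nonneg (Λ + 8)]
  have hgap : 0 < (Λ - 10) * (Λ - 12) := by
    have h3 : 2 * Real.cos (e/2)^2 * (Λ^2 + 16*Λ + 240) = 4 * ((Λ - 10) * (Λ - 12)) := by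
      linear_combination hrel - (Λ^2 + 16*Λ + 240) * h2
    nlinarith [mul_pos (mul_pos hcpos hcpos) hQpos, h3]
  have h10 : Λ - 10 ≠ 0 := by
    intro h0
    have hΛ10 : Λ = 10 := by linarith
    rw [hΛ10] at hgap
    norm_num at hgap
  have h10' : (10:ℝ) - Λ ≠ 0 := fun hc => h10 (by linarith)
  have hq : 19*Λ^2 + 120*Λ - 3600 ≠ 0 := by
    intro h0
    have h1 : 538 * Λ < 5880 := by nlinarith [hgap]
    have h2' : Λ * (538 * Λ) ≤ Λ * 5880 := mul_le_mul_of_nonneg_left h1.le hΛ0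
    nlinarith [h0, h2', h1]
  have hQ0 : Λ^2 + 16*Λ + 240 ≠ 0 := ne_of_gt hQpos
  have hcos : Real.cos e = (4*(Λ-10)*(Λ-12) - (Λ^2+16*Λ+240)) / (Λ^2+16*Λ+240) := by
    rw [eq_div_iff hQ0]
    linear_combination hrel
  rw [hcos, hh]
  simp only [Wtilde]
  have hm0' : ((N:ℝ) + 1) ≠ 0 := ne_of_gt hm0
  field_simp
  ring
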